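/- Let p be a prime and k a field of characteristic p. For every polynomial f in the two-variable polynomial ring k[X,Y], applying the (p-1)-fold iterated partial derivative with respect to X followed by the (p-1)-fold iterated partial derivative with respect to Y sends f = \sum_{i,j} c_{i,j} X^i Y^j to \sum_{i,j} c_{ip+p-1, jp+p-1} X^{ip} Y^{jp}; i.e., the operator \nabla = \partial^{2p-2}/(\partial X^{p-1} \partial Y^{p-1}) satisfies \nabla(\sum_{i,j} c_{i,j} X^i Y^j) = \sum_{i,j} c_{ip+p-1, jp+p-1} X^{ip} Y^{jp}. -/

import Mathlib

open MvPolynomial Finsupp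

lemma my_coeff_pderiv {σ R : Type*} [CommSemiring R] [DecidableEq σ] (i : σ)
    (m : σ →₀ ℕ) (f : MvPolynomial σ R) :
    coeff m (pderiv i f) = (m i + 1) * coeff (m + Finsupp.single i 1) f := by
  induction f using MvPolynomial.induction_on' with
  | monomial s a =>
    rw [pderiv_monomial, coeff_monomial, coeff_monomial]
    by_cases h : s i = 0
    · have hne : s ≠ m + Finsupp.single i 1 := by
        intro hs
        rw [hs] at h
        simp at h
      simp [h, hne]
    · by_cases hs : s = m + Finsupp.single i 1
      · subst hs
        rw [if_pos (add_tsub_cancel_right _ _), if_pos rfl]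
        simp [mul_comm]
      · have h1 : Finsupp.single i 1 ≤ s := by
          rw [Finsupp.single_le_iff]
          omega
        have hne : s - Finsupp.single i 1 ≠ m := by
          intro hh
          exact hs (by rw [← hh, tsub_add_cancel_of_le h1])
        rw [if_neg hne, if_neg hs, mul_zero]
  | add f g hf hg => simp [hf, hg, mul_add]

lemma my_coeff_pderiv_iterate {σ R : Type*} [CommSemiring R] [DecidableEq σ] (i : σ) (n : ℕ)
    (m : σ →₀ ℕ) (f : MvPolynomial σ R) :
    coeff m ((⇑(pderiv i))^[n] f)
      = ((m i + n).descFactorial n : R) * coeff (m + Finsupp.single i n) f := by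
  induction n generalizing m with
  | zero => simp
  | succ n ih =>
    rw [Function.iterate_succ_apply', my_coeff_pderiv, ih]
    have h1 : ((m + Finsupp.single i 1) : σ →₀ ℕ) i = m i + 1 := by simp
    have h2 : m + Finsupp.single i 1 + Finsupp.single i n = m + Finsupp.single i (n + 1) := by
      rw [add_assoc, ← Finsupp.single_add, add_comm 1 n]
    have h3 : (m i + (n + 1)).descFactorial (n + 1)
        = (m i + 1) * ((m i + 1 + n).descFactorial n) := by
      have e1 : m i + (n + 1) = m i + 1 + n := by omega
      rw [e1, Nat.descFactorial_succ]
      congr 1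
      omega
    rw [h1, h2, h3]
    push_cast
    ring

lemma key_descFactorial (p : ℕ) (hp : p.Prime) (k : Type*) [Field k] [CharP k p] (a : ℕ) :
    (((a + (p - 1)).descFactorial (p - 1) : ℕ) : k) = if p ∣ a then -1 else 0 := by
  haveI : Fact p.Prime := ⟨hp⟩
  have hp2 : 2 ≤ p := hp.two_le
  rw [Nat.descFactorial_eq_prod_range, Nat.cast_prod]
  by_cases hA : p ∣ a
  · rw [if_pos hA]
    have hstep : ∀ i ∈ Finset.range (p - 1),
        ((a + (p - 1) - i : ℕ) : k) = (((p - 1) - i : ℕ) : k) := by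
      intro i hi
      rw [Finset.mem_range] at hi
      have : a + (p - 1) - i = a + ((p - 1) - i) := by omega
      rw [this, Nat.cast_add, (CharP.cast_eq_zero_iff k p a).mpr hA, zero_add]
    rw [Finset.prod_congr rfl hstep, ← Nat.cast_prod, ← Nat.descFactorial_eq_prod_range,
      Nat.descFactorial_self]
    have hw := ZMod.wilsons_lemma (p := p)
    calc ((Nat.factorial (p - 1) : ℕ) : k)
        = (ZMod.castHom (dvd_refl p) k) ((Nat.factorial (p - 1) : ℕ) : ZMod p) := by
          rw [map_natCast]
      _ = -1 := by rw [hw, map_neg, map_one]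
  · rw [if_neg hA]
    have hr1 : 1 ≤ a % p := by
      rcases Nat.eq_zero_or_pos (a % p) with h | h
      · exact absurd (Nat.dvd_of_mod_eq_zero h) hA
      · exact h
    have hr2 : a % p < p := Nat.mod_lt _ (by omega)
    have hdm : p * (a / p) + a % p = a := Nat.div_add_mod a p
    apply Finset.prod_eq_zero (i := a % p - 1)
    · rw [Finset.mem_range]; omega
    · have h1 : a + (p - 1) - (a % p - 1) = p * (a / p) + p := by omega
      rw [h1]
      have h2 : (p : ℕ) ∣ p * (a / p) + p := ⟨a / p + 1, by ring⟩
      exact (CharP.cast_eq_zero_iff k p _).mpr h2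

/-- The iterated-partial-derivative operator `∇ = ∂^{2p-2}/(∂X^{p-1} ∂Y^{p-1})` on `k[X,Y]`
(`k` a field of characteristic `p`) sends `∑_{i,j} c_{i,j} X^i Y^j` to
`∑_{i,j} c_{ip+p-1, jp+p-1} X^{ip} Y^{jp}`. -/
theorem nabla_formula (p : ℕ) (hp : p.Prime) (k : Type*) [Field k] [CharP k p]
    (f : MvPolynomial (Fin 2) k) :
    (⇑(pderiv (1 : Fin 2)))^[p - 1] ((⇑(pderiv (0 : Fin 2)))^[p - 1] f) =
    ∑ i ∈ Finset.range (f.totalDegree + 1), ∑ j ∈ Finset.range (f.totalDegree + 1),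
      C (coeff (Finsupp.single (0 : Fin 2) (i * p + p - 1)
            + Finsupp.single (1 : Fin 2) (j * p + p - 1)) f)
        * X 0 ^ (i * p) * X 1 ^ (j * p) := by
  have hp2 : 2 ≤ p := hp.two_le
  have hmono : ∀ (s t : ℕ) (c : k),
      C c * X 0 ^ s * X 1 ^ t
        = monomial (Finsupp.single (0 : Fin 2) s + Finsupp.single (1 : Fin 2) t) c := by
    intro s t c
    rw [C_apply, X_pow_eq_monomial, X_pow_eq_monomial, monomial_mul, monomial_mul]
    simp
  ext m
  rw [my_coeff_pderiv_iterate, my_coeff_pderiv_iterate]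
  have hm0 : ((m + Finsupp.single (1 : Fin 2) (p - 1)) : Fin 2 →₀ ℕ) 0 = m 0 := by simp
  rw [hm0]
  simp only [hmono, coeff_sum, coeff_monomial]
  rw [key_descFactorial p hp k (m 1), key_descFactorial p hp k (m 0)]
  by_cases hA : p ∣ m 0
  · by_cases hB : p ∣ m 1
    · obtain ⟨i₀, hi₀⟩ := hA
      obtain ⟨j₀, hj₀⟩ := hB
      have hip : i₀ * p = m 0 := by rw [hi₀, mul_comm]
      have hjp : j₀ * p = m 1 := by rw [hj₀, mul_comm]
      have hmeq : m = Finsupp.single (0 : Fin 2) (i₀ * p) + Finsupp.single (1 : Fin 2) (j₀ * p) := by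
        ext x
        fin_cases x <;> simp [Finsupp.single_apply] <;> omega
      have hcond : ∀ i j : ℕ,
          (Finsupp.single (0 : Fin 2) (i * p) + Finsupp.single (1 : Fin 2) (j * p) = m)
            ↔ (i = i₀ ∧ j = j₀) := by
        intro i j
        constructor
        · intro h
          have h0 := DFunLike.congr_fun h 0
          have h1 := DFunLike.congr_fun h 1
          simp [Finsupp.single_apply] at h0 h1
          have c1 : p * i₀ = i₀ * p := mul_comm p i₀
          have c2 : p * j₀ = j₀ * p := mul_comm p j₀
          constructor
          · have : i * p = i₀ * p := by omega
            exact Nat.eq_of_mul_eq_mul_right (by omega) this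
          · have : j * p = j₀ * p := by omega
            exact Nat.eq_of_mul_eq_mul_right (by omega) this
        · rintro ⟨rfl, rfl⟩
          exact hmeq.symm
      have htarget : m + Finsupp.single (1 : Fin 2) (p - 1) + Finsupp.single (0 : Fin 2) (p - 1)
          = Finsupp.single (0 : Fin 2) (i₀ * p + p - 1)
            + Finsupp.single (1 : Fin 2) (j₀ * p + p - 1) := by
        ext x
        fin_cases x <;> simp [Finsupp.single_apply] <;> omega
      rw [if_pos ⟨j₀, hj₀⟩, if_pos ⟨i₀, hi₀⟩, htarget]
      simp only [hcond]
      set c : ℕ → ℕ → k := fun i j =>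
        coeff (Finsupp.single (0 : Fin 2) (i * p + p - 1)
          + Finsupp.single (1 : Fin 2) (j * p + p - 1)) f with hc
      set D := f.totalDegree with hD
      have hinner : ∀ i ∈ Finset.range (D + 1),
          (∑ j ∈ Finset.range (D + 1), if i = i₀ ∧ j = j₀ then c i j else 0)
            = if i = i₀ then (if j₀ ≤ D then c i j₀ else 0) else 0 := by
        intro i _
        by_cases h : i = i₀
        · subst h
          simp only [true_and]
          rw [Finset.sum_ite_eq' (Finset.range (D + 1)) j₀]
          simp [Nat.lt_succ_iff]
        · simp [h]
      rw [Finset.sum_congr rfl hinner, Finset.sum_ite_eq' (Finset.range (D + 1)) i₀]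
      simp only [Finset.mem_range, Nat.lt_succ_iff]
      by_cases hi : i₀ ≤ D
      · by_cases hj : j₀ ≤ D
        · rw [if_pos hi, if_pos hj]; ring
        · rw [if_pos hi, if_neg hj]
          have hz : coeff (Finsupp.single (0 : Fin 2) (i₀ * p + p - 1)
              + Finsupp.single (1 : Fin 2) (j₀ * p + p - 1)) f = 0 := by
            apply coeff_eq_zero_of_totalDegree_lt
            set d := Finsupp.single (0 : Fin 2) (i₀ * p + p - 1)
              + Finsupp.single (1 : Fin 2) (j₀ * p + p - 1) with hd
            have hsum : ∑ x ∈ d.support, d x = d 0 + d 1 := by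
              rw [Finset.sum_subset (Finset.subset_univ _)
                (fun x _ hx => Finsupp.notMem_support_iff.mp hx)]
              simp [Fin.sum_univ_two]
            have hd0 : d 0 = i₀ * p + p - 1 := by simp [hd, Finsupp.single_apply]
            have hd1 : d 1 = j₀ * p + p - 1 := by simp [hd, Finsupp.single_apply]
            have hmul : j₀ * 2 ≤ j₀ * p := Nat.mul_le_mul_left j₀ hp2
            rw [hsum, hd0, hd1]
            omega
          rw [hz]; ring
      · rw [if_neg hi]
        have hz : coeff (Finsupp.single (0 : Fin 2) (i₀ * p + p - 1)
            + Finsupp.single (1 : Fin 2) (j₀ * p + p - 1)) f = 0 := by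
          apply coeff_eq_zero_of_totalDegree_lt
          set d := Finsupp.single (0 : Fin 2) (i₀ * p + p - 1)
            + Finsupp.single (1 : Fin 2) (j₀ * p + p - 1) with hd
          have hsum : ∑ x ∈ d.support, d x = d 0 + d 1 := by
            rw [Finset.sum_subset (Finset.subset_univ _)
              (fun x _ hx => Finsupp.notMem_support_iff.mp hx)]
            simp [Fin.sum_univ_two]
          have hd0 : d 0 = i₀ * p + p - 1 := by simp [hd, Finsupp.single_apply]
          have hd1 : d 1 = j₀ * p + p - 1 := by simp [hd, Finsupp.single_apply]
          have hmul : i₀ * 2 ≤ i₀ * p := Nat.mul_le_mul_left i₀ hp2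
          rw [hsum, hd0, hd1]
          omega
        rw [hz]; ring
    · rw [if_neg hB, zero_mul]
      symm
      apply Finset.sum_eq_zero
      intro i _
      apply Finset.sum_eq_zero
      intro j _
      rw [if_neg]
      intro h
      have h1 := DFunLike.congr_fun h 1
      simp [Finsupp.single_apply] at h1
      exact hB ⟨j, by have := mul_comm p j; omega⟩
  · rw [if_neg hA, zero_mul, mul_zero]
    symm
    apply Finset.sum_eq_zero
    intro i _
    apply Finset.sum_eq_zero
    intro j _
    rw [if_neg]
    intro h
    have h0 := DFunLike.congr_fun h 0
    simp [Finsupp.single_apply] at h0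
    exact hA ⟨i, by have := mul_comm p i; omega⟩
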